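/- Let (Ω, ℙ) be a probability space, let N ≥ 1, and let X_1, …, X_N be real random variables that all have the same distribution (they need not be independent). Let 1 ≤ r ≤ r̃ < ∞ and suppose E[|X_1|^{r̃}] < ∞. Then ( E[ max_{1 ≤ i ≤ N} |X_i|^r ] )^{1/r} ≤ N^{1/r̃} · ( E[|X_1|^{r̃}] )^{1/r̃}. -/

import Mathlib

open MeasureTheory
open scoped ENNReal

private lemma lyapunov {α : Type*} [MeasurableSpace α] (μ : Measure α)
    [IsProbabilityMeasure μ] {f : α → ℝ≥0∞} (hf : AEMeasurable f μ) {p q : ℝ}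
    (hp : 0 < p) (hpq : p ≤ q) :
    (∫⁻ a, f a ^ p ∂μ) ^ (1 / p) ≤ (∫⁻ a, f a ^ q ∂μ) ^ (1 / q) := by
  have hq0_lt : 0 < q := lt_of_lt_of_le hp hpq
  by_cases hpq_eq : p = q
  · rw [hpq_eq]
  have hpq' : p < q := lt_of_le_of_ne hpq hpq_eq
  let g := fun _ : α => (1 : ℝ≥0∞)
  have h_rw : (∫⁻ a, f a ^ p ∂μ) = ∫⁻ a, (f a * g a) ^ p ∂μ :=
    lintegral_congr fun a => by simp [g]
  rw [h_rw]
  let r := p * q / (q - p)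
  have hpqr : 1 / p = 1 / q + 1 / r := by
    have hqp : q - p ≠ 0 := sub_ne_zero.mpr (Ne.symm hpq_eq)
    simp only [r]; field_simp <;> ring
  calc
    (∫⁻ a : α, (f a * g a) ^ p ∂μ) ^ (1 / p) ≤
        (∫⁻ a : α, f a ^ q ∂μ) ^ (1 / q) * (∫⁻ a : α, g a ^ r ∂μ) ^ (1 / r) :=
      ENNReal.lintegral_Lp_mul_le_Lq_mul_Lr hp hpq' hpqr μ hf aemeasurable_const
    _ = (∫⁻ a : α, f a ^ q ∂μ) ^ (1 / q) := by simp [g]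

/-- Moment bound for the maximum of identically distributed random variables:
if `X_1, …, X_N` are identically distributed (not necessarily independent) and
`1 ≤ r ≤ r̃ < ∞` with `E[|X_1|^r̃] < ∞`, then
`(E[max_i |X_i|^r])^{1/r} ≤ N^{1/r̃} (E[|X_1|^r̃])^{1/r̃}`. -/
theorem statement11 {Ω : Type*} [MeasurableSpace Ω] (P : Measure Ω)
    [IsProbabilityMeasure P] (N : ℕ) (hN : 0 < N)
    (X : Fin N → Ω → ℝ) (hXm : ∀ i, Measurable (X i))
    (hid : ∀ i, P.map (X i) = P.map (X ⟨0, hN⟩))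
    (r rt : ℝ) (hr : 1 ≤ r) (hrt : r ≤ rt)
    (hfin : ∫⁻ ω, ENNReal.ofReal (|X ⟨0, hN⟩ ω| ^ rt) ∂P < ⊤) :
    (∫⁻ ω, ENNReal.ofReal (⨆ i, |X i ω| ^ r) ∂P) ^ (1 / r)
      ≤ (N : ENNReal) ^ (1 / rt)
        * (∫⁻ ω, ENNReal.ofReal (|X ⟨0, hN⟩ ω| ^ rt) ∂P) ^ (1 / rt) := by
  haveI : Nonempty (Fin N) := ⟨⟨0, hN⟩⟩
  have hr0 : 0 < r := lt_of_lt_of_le one_pos hr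
  have hrt0 : 0 < rt := lt_of_lt_of_le hr0 hrt
  set g : Ω → ℝ≥0∞ := fun ω => ⨆ i, ENNReal.ofReal |X i ω| with hg
  have hgm : Measurable g :=
    Measurable.iSup fun i => ENNReal.measurable_ofReal.comp (hXm i).abs
  -- pointwise identification of the integrand with `g ^ r`
  have hpt : ∀ ω, ENNReal.ofReal (⨆ i, |X i ω| ^ r) = g ω ^ r := by
    intro ω
    obtain ⟨i₀, hmax⟩ := Finite.exists_max (fun i => |X i ω|)
    have h1 : (⨆ i, |X i ω| ^ r) = |X i₀ ω| ^ r :=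
      le_antisymm (ciSup_le fun i => Real.rpow_le_rpow (abs_nonneg _) (hmax i) hr0.le)
        (le_ciSup (f := fun i => |X i ω| ^ r) (Set.Finite.bddAbove (Set.finite_range _)) i₀)
    have h2 : g ω = ENNReal.ofReal |X i₀ ω| :=
      le_antisymm (iSup_le fun i => ENNReal.ofReal_le_ofReal (hmax i)) (le_iSup (fun i => ENNReal.ofReal |X i ω|) i₀)
    rw [h1, h2, ← ENNReal.ofReal_rpow_of_nonneg (abs_nonneg _) hr0.le]
  have hptI : ∀ ω, ENNReal.ofReal (|X ⟨0, hN⟩ ω| ^ rt)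
      = ENNReal.ofReal |X ⟨0, hN⟩ ω| ^ rt := fun ω =>
    (ENNReal.ofReal_rpow_of_nonneg (abs_nonneg _) hrt0.le).symm
  set I : ℝ≥0∞ := ∫⁻ ω, ENNReal.ofReal |X ⟨0, hN⟩ ω| ^ rt ∂P with hI
  have hIeq : (∫⁻ ω, ENNReal.ofReal (|X ⟨0, hN⟩ ω| ^ rt) ∂P) = I :=
    lintegral_congr fun ω => hptI ω
  -- each `X i` contributes the same `rt`-moment
  have hmom : ∀ i : Fin N, (∫⁻ ω, ENNReal.ofReal |X i ω| ^ rt ∂P) = I := by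
    intro i
    have hmeas : Measurable fun x : ℝ => ENNReal.ofReal |x| ^ rt :=
      (ENNReal.measurable_ofReal.comp measurable_abs).pow_const _
    calc (∫⁻ ω, ENNReal.ofReal |X i ω| ^ rt ∂P)
        = ∫⁻ x, ENNReal.ofReal |x| ^ rt ∂(P.map (X i)) :=
          (lintegral_map hmeas (hXm i)).symm
      _ = ∫⁻ x, ENNReal.ofReal |x| ^ rt ∂(P.map (X ⟨0, hN⟩)) := by rw [hid i]
      _ = I := lintegral_map hmeas (hXm _)
  -- bound the `rt`-moment of the supremum by the sum
  have hsum : (∫⁻ ω, g ω ^ rt ∂P) ≤ N * I := by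
    have hle : ∀ ω, g ω ^ rt ≤ ∑ i, ENNReal.ofReal |X i ω| ^ rt := by
      intro ω
      obtain ⟨i₀, hmax⟩ := Finite.exists_max (fun i => |X i ω|)
      have h2 : g ω = ENNReal.ofReal |X i₀ ω| :=
        le_antisymm (iSup_le fun i => ENNReal.ofReal_le_ofReal (hmax i)) (le_iSup (fun i => ENNReal.ofReal |X i ω|) i₀)
      rw [h2]
      exact Finset.single_le_sum (f := fun i => ENNReal.ofReal |X i ω| ^ rt) (fun i _ => zero_le) (Finset.mem_univ i₀)
    calc (∫⁻ ω, g ω ^ rt ∂P)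
        ≤ ∫⁻ ω, ∑ i, ENNReal.ofReal |X i ω| ^ rt ∂P := lintegral_mono hle
      _ = ∑ i, ∫⁻ ω, ENNReal.ofReal |X i ω| ^ rt ∂P :=
          lintegral_finset_sum _ fun i _ =>
            (ENNReal.measurable_ofReal.comp (hXm i).abs).pow_const _
      _ = ∑ _i : Fin N, I := by simp [hmom]
      _ = N * I := by simp [mul_comm]
  calc (∫⁻ ω, ENNReal.ofReal (⨆ i, |X i ω| ^ r) ∂P) ^ (1 / r)
      = (∫⁻ ω, g ω ^ r ∂P) ^ (1 / r) := by
        congr 1; exact lintegral_congr fun ω => hpt ω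
    _ ≤ (∫⁻ ω, g ω ^ rt ∂P) ^ (1 / rt) :=
        lyapunov P hgm.aemeasurable hr0 hrt
    _ ≤ ((N : ℝ≥0∞) * I) ^ (1 / rt) :=
        ENNReal.rpow_le_rpow hsum (by positivity)
    _ = (N : ENNReal) ^ (1 / rt) * I ^ (1 / rt) :=
        ENNReal.mul_rpow_of_nonneg _ _ (by positivity)
    _ = (N : ENNReal) ^ (1 / rt)
        * (∫⁻ ω, ENNReal.ofReal (|X ⟨0, hN⟩ ω| ^ rt) ∂P) ^ (1 / rt) := by rw [hIeq]
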